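/- For every R > 0: (𝔅_μ + ℭ_ν) ∩ B′′_R ⊆ (𝔅_μ ∩ B′′_R) + (ℭ_ν ∩ B′′_R), and (𝔅_μ + ℭ_ν + N) ∩ B′′_R ⊆ (𝔅_μ ∩ B′′_{3R}) + (ℭ_ν ∩ B′′_{3R}) + (N ∩ B′′_{7R}), where B′′_R denotes the closed ball of radius R centered at the origin in C_b(Ω)′′ and N := {a ∈ C_b(Ω)′′ : a ≤ 0}. -/

import Mathlib

open MeasureTheory BoundedContinuousFunction NormedSpace Pointwise

noncomputable section

variable {d : ℕ}

/-- Extension `h ↦ h ⊕ 0` as a continuous linear map `C_b(X) → C_b(Ω)`. -/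
def extX {X Y : Set (EuclideanSpace ℝ (Fin d))} :
    (↥X →ᵇ ℝ) →L[ℝ] ((↥X × ↥Y) →ᵇ ℝ) :=
  LinearMap.mkContinuous
    { toFun := fun h => h.compContinuous (ContinuousMap.fst)
      map_add' := fun h₁ h₂ => by ext z; simp [compContinuous_apply]
      map_smul' := fun c h => by ext z; simp [compContinuous_apply] }
    1 (fun h => by simpa using h.norm_compContinuous_le (ContinuousMap.fst))

/-- Extension `g ↦ 0 ⊕ g` as a continuous linear map `C_b(Y) → C_b(Ω)`. -/
def extY {X Y : Set (EuclideanSpace ℝ (Fin d))} :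
    (↥Y →ᵇ ℝ) →L[ℝ] ((↥X × ↥Y) →ᵇ ℝ) :=
  LinearMap.mkContinuous
    { toFun := fun g => g.compContinuous (ContinuousMap.snd)
      map_add' := fun h₁ h₂ => by ext z; simp [compContinuous_apply]
      map_smul' := fun c h => by ext z; simp [compContinuous_apply] }
    1 (fun g => by simpa using g.norm_compContinuous_le (ContinuousMap.snd))

/-- A finite Borel measure, as a continuous linear functional on bounded
continuous functions. -/
def integrationCLM {Z : Type*} [TopologicalSpace Z] [MeasurableSpace Z]
    [OpensMeasurableSpace Z] (μ : Measure Z) [IsFiniteMeasure μ] : StrongDual ℝ (Z →ᵇ ℝ) :=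
  LinearMap.mkContinuous
    { toFun := fun h => ∫ x, h x ∂μ
      map_add' := fun h g => integral_add (h.integrable μ) (g.integrable μ)
      map_smul' := fun c h => by simpa using integral_smul c (fun x => h x) }
    (μ Set.univ).toReal
    (fun h => h.norm_integral_le_mul_norm μ)

/-- Direct instances for `Z →ᵇ ℝ` (instance search needs them in nested problems). -/
instance bcfRealSeminormedAddCommGroup {Z : Type*} [TopologicalSpace Z] :
    SeminormedAddCommGroup (Z →ᵇ ℝ) :=
  BoundedContinuousFunction.instSeminormedAddCommGroup

instance bcfRealNormedSpace {Z : Type*} [TopologicalSpace Z] : NormedSpace ℝ (Z →ᵇ ℝ) :=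
  BoundedContinuousFunction.instNormedSpace

/-- The set `𝔅_μ ⊆ C_b(Ω)′′` of elements of the form `b ⊕ 0` with `b(μ) = 0`. -/
def Bmu (X Y : Set (EuclideanSpace ℝ (Fin d))) (μ : Measure ↥X) [IsFiniteMeasure μ] :
    Set (StrongDual ℝ (StrongDual ℝ ((↥X × ↥Y) →ᵇ ℝ))) :=
  {a | ∃ b : StrongDual ℝ (StrongDual ℝ (↥X →ᵇ ℝ)),
    (∀ η : StrongDual ℝ ((↥X × ↥Y) →ᵇ ℝ), a η = b (η.comp extX)) ∧
    b (integrationCLM μ) = 0}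

/-- The set `ℭ_ν ⊆ C_b(Ω)′′` of elements of the form `0 ⊕ c` with `c(ν) = 0`. -/
def Cnu (X Y : Set (EuclideanSpace ℝ (Fin d))) (ν : Measure ↥Y) [IsFiniteMeasure ν] :
    Set (StrongDual ℝ (StrongDual ℝ ((↥X × ↥Y) →ᵇ ℝ))) :=
  {a | ∃ c : StrongDual ℝ (StrongDual ℝ (↥Y →ᵇ ℝ)),
    (∀ η : StrongDual ℝ ((↥X × ↥Y) →ᵇ ℝ), a η = c (η.comp extY)) ∧
    c (integrationCLM ν) = 0}

/-- The nonpositive elements of the bidual `C_b(Ω)′′`. -/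
def Nneg (X Y : Set (EuclideanSpace ℝ (Fin d))) :
    Set (StrongDual ℝ (StrongDual ℝ ((↥X × ↥Y) →ᵇ ℝ))) :=
  {a | ∀ η : StrongDual ℝ ((↥X × ↥Y) →ᵇ ℝ),
    (∀ f : (↥X × ↥Y) →ᵇ ℝ, 0 ≤ f → 0 ≤ η f) → a η ≤ 0}




noncomputable section

variable {Z : Type*} [TopologicalSpace Z]

/-- positivity of a functional on C_b(Z) -/
def IsPos (ζ : StrongDual ℝ (Z →ᵇ ℝ)) : Prop := ∀ k : Z →ᵇ ℝ, 0 ≤ k → 0 ≤ ζ k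

lemma one_norm_le : ‖(1 : Z →ᵇ ℝ)‖ ≤ 1 :=
  (norm_le zero_le_one).2 fun x => by simp

lemma IsPos.mono {ζ : StrongDual ℝ (Z →ᵇ ℝ)} (hζ : IsPos ζ) {k l : Z →ᵇ ℝ} (h : k ≤ l) :
    ζ k ≤ ζ l := by
  have h1 := hζ (l - k) (fun x => by simpa using h x)
  have h2 : ζ (l - k) = ζ l - ζ k := by simp
  linarith [h2 ▸ h1]

lemma IsPos.apply_le {ζ : StrongDual ℝ (Z →ᵇ ℝ)} (hζ : IsPos ζ) (k : Z →ᵇ ℝ) :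
    ζ k ≤ ζ 1 * ‖k‖ := by
  have h : k ≤ ‖k‖ • (1 : Z →ᵇ ℝ) := fun x => by
    simpa using le_trans (le_abs_self (k x)) (by simpa using k.norm_coe_le_norm x)
  have := hζ.mono h
  rw [_root_.map_smul] at this
  simpa [mul_comm] using this

lemma IsPos.abs_apply_le {ζ : StrongDual ℝ (Z →ᵇ ℝ)} (hζ : IsPos ζ) (k : Z →ᵇ ℝ) :
    |ζ k| ≤ ζ 1 * ‖k‖ := by
  rw [abs_le]
  refine ⟨?_, hζ.apply_le k⟩
  have := hζ.apply_le (-k)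
  rw [map_neg, norm_neg] at this
  linarith

lemma IsPos.one_nonneg {ζ : StrongDual ℝ (Z →ᵇ ℝ)} (hζ : IsPos ζ) : 0 ≤ ζ 1 :=
  hζ 1 (fun x => by simp)

lemma IsPos.norm_le {ζ : StrongDual ℝ (Z →ᵇ ℝ)} (hζ : IsPos ζ) : ‖ζ‖ ≤ ζ 1 :=
  ContinuousLinearMap.opNorm_le_bound _ hζ.one_nonneg fun k => by
    rw [Real.norm_eq_abs]; exact hζ.abs_apply_le k

lemma IsPos.add {ζ₁ ζ₂ : StrongDual ℝ (Z →ᵇ ℝ)} (h₁ : IsPos ζ₁) (h₂ : IsPos ζ₂) :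
    IsPos (ζ₁ + ζ₂) := fun k hk => by
  have := h₁ k hk; have := h₂ k hk
  simp only [ContinuousLinearMap.add_apply]; linarith

lemma IsPos.smul {ζ : StrongDual ℝ (Z →ᵇ ℝ)} (hζ : IsPos ζ) {c : ℝ} (hc : 0 ≤ c) :
    IsPos (c • ζ) := fun k hk => by
  have := hζ k hk
  simp only [ContinuousLinearMap.smul_apply, smul_eq_mul]
  positivity

lemma isPos_zero : IsPos (0 : StrongDual ℝ (Z →ᵇ ℝ)) := fun k _ => by simp

lemma norm_sup_zero_le (f : Z →ᵇ ℝ) : ‖f ⊔ 0‖ ≤ ‖f‖ := by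
  refine (norm_le (norm_nonneg f)).2 fun x => ?_
  have := f.norm_coe_le_norm x
  simp only [coe_sup, Pi.sup_apply, coe_zero, Pi.zero_apply]
  rw [Real.norm_eq_abs] at *
  rcases le_total (f x) 0 with h | h
  · rw [sup_eq_right.2 h]; simpa using (abs_nonneg (f x)).trans this
  · rw [sup_eq_left.2 h]; exact this

lemma sup_zero_sub (f : Z →ᵇ ℝ) : f ⊔ 0 - (-f) ⊔ 0 = f := by
  ext x
  simp only [coe_sub, Pi.sub_apply, coe_sup, Pi.sup_apply, coe_neg, Pi.neg_apply,
    coe_zero, Pi.zero_apply]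
  rcases le_total (f x) 0 with h | h
  · rw [sup_eq_right.2 h, sup_eq_left.2 (by linarith : (0:ℝ) ≤ -f x)]; ring
  · rw [sup_eq_left.2 h, sup_eq_right.2 (by linarith : -f x ≤ (0:ℝ))]; ring

lemma sup_zero_nonneg (f : Z →ᵇ ℝ) : (0 : Z →ᵇ ℝ) ≤ f ⊔ 0 := le_sup_right

lemma sup_zero_of_nonneg {f : Z →ᵇ ℝ} (h : 0 ≤ f) : f ⊔ 0 = f := sup_eq_left.2 h

lemma sInf_add_sInf {S₁ S₂ : Set ℝ} (h₁ : S₁.Nonempty) (h₂ : S₂.Nonempty)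
    (b₂ : BddBelow S₂) {x : ℝ} (h : ∀ r₁ ∈ S₁, ∀ r₂ ∈ S₂, x ≤ r₁ + r₂) :
    x ≤ sInf S₁ + sInf S₂ := by
  have key : ∀ r₁ ∈ S₁, x - r₁ ≤ sInf S₂ := fun r₁ hr₁ =>
    le_csInf h₂ (fun r₂ hr₂ => by linarith [h r₁ hr₁ r₂ hr₂])
  have h3 : x - sInf S₂ ≤ sInf S₁ :=
    le_csInf h₁ (fun r₁ hr₁ => by linarith [key r₁ hr₁])
  linarith

def splitSet (P₁ P₂ : StrongDual ℝ (Z →ᵇ ℝ)) (k : Z →ᵇ ℝ) : Set ℝ :=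
  {r | ∃ k₁ k₂ : Z →ᵇ ℝ, 0 ≤ k₁ ∧ 0 ≤ k₂ ∧ k₁ + k₂ = k ∧ r = P₁ k₁ + P₂ k₂}

def mfun (P₁ P₂ : StrongDual ℝ (Z →ᵇ ℝ)) (k : Z →ᵇ ℝ) : ℝ := sInf (splitSet P₁ P₂ k)

variable {P₁ P₂ : StrongDual ℝ (Z →ᵇ ℝ)}

lemma splitSet_nonempty {k : Z →ᵇ ℝ} (hk : 0 ≤ k) : (splitSet P₁ P₂ k).Nonempty :=
  ⟨P₁ k + P₂ 0, k, 0, hk, le_refl _, by simp, rfl⟩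

section posmeet
variable (h₁ : IsPos P₁) (h₂ : IsPos P₂)
include h₁ h₂

lemma splitSet_bddBelow (k : Z →ᵇ ℝ) : BddBelow (splitSet P₁ P₂ k) := by
  refine ⟨0, fun r hr => ?_⟩
  obtain ⟨k₁, k₂, hk₁, hk₂, -, rfl⟩ := hr
  have := h₁ k₁ hk₁; have := h₂ k₂ hk₂; linarith

lemma mfun_nonneg {k : Z →ᵇ ℝ} (hk : 0 ≤ k) : 0 ≤ mfun P₁ P₂ k :=
  le_csInf (splitSet_nonempty hk) (fun r hr => by
    obtain ⟨k₁, k₂, hk₁, hk₂, -, rfl⟩ := hr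
    have := h₁ k₁ hk₁; have := h₂ k₂ hk₂; linarith)

lemma mfun_le_left {k : Z →ᵇ ℝ} (hk : 0 ≤ k) : mfun P₁ P₂ k ≤ P₁ k := by
  have h : P₁ k + P₂ 0 ∈ splitSet P₁ P₂ k := ⟨k, 0, hk, le_refl _, by simp, rfl⟩
  have := csInf_le (splitSet_bddBelow h₁ h₂ k) h; simp at this; exact this

lemma mfun_le_right {k : Z →ᵇ ℝ} (hk : 0 ≤ k) : mfun P₁ P₂ k ≤ P₂ k := by
  have h : P₁ 0 + P₂ k ∈ splitSet P₁ P₂ k := ⟨0, k, le_refl _, hk, by simp, rfl⟩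
  have := csInf_le (splitSet_bddBelow h₁ h₂ k) h; simp at this; exact this

lemma mfun_zero : mfun P₁ P₂ 0 = 0 :=
  le_antisymm (by simpa using mfun_le_left h₁ h₂ (le_refl (0 : Z →ᵇ ℝ)))
    (mfun_nonneg h₁ h₂ (le_refl _))

lemma mfun_add {k l : Z →ᵇ ℝ} (hk : 0 ≤ k) (hl : 0 ≤ l) :
    mfun P₁ P₂ (k + l) = mfun P₁ P₂ k + mfun P₁ P₂ l := by
  refine le_antisymm ?_ ?_
  · refine sInf_add_sInf (splitSet_nonempty hk) (splitSet_nonempty hl)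
      (splitSet_bddBelow h₁ h₂ l) ?_
    rintro r₁ ⟨k₁, k₂, hk₁, hk₂, hks, rfl⟩ r₂ ⟨l₁, l₂, hl₁, hl₂, hls, rfl⟩
    have hmem : (P₁ (k₁ + l₁) + P₂ (k₂ + l₂)) ∈ splitSet P₁ P₂ (k + l) := by
      refine ⟨k₁ + l₁, k₂ + l₂, add_nonneg hk₁ hl₁, add_nonneg hk₂ hl₂, ?_, rfl⟩
      rw [← hks, ← hls]; abel
    have h5 := csInf_le (splitSet_bddBelow h₁ h₂ (k + l)) hmem
    simp only [map_add] at h5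
    unfold mfun
    linarith
  · refine le_csInf (splitSet_nonempty (add_nonneg hk hl)) ?_
    rintro r ⟨s₁, s₂, hs₁, hs₂, hss, rfl⟩
    have hk₁0 : (0 : Z →ᵇ ℝ) ≤ k ⊓ s₁ := le_inf hk hs₁
    have hk₂0 : (0 : Z →ᵇ ℝ) ≤ k - k ⊓ s₁ := sub_nonneg.2 inf_le_left
    have hl₁0 : (0 : Z →ᵇ ℝ) ≤ s₁ - k ⊓ s₁ := sub_nonneg.2 inf_le_right
    have hl₂0 : (0 : Z →ᵇ ℝ) ≤ l - (s₁ - k ⊓ s₁) := by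
      rw [sub_nonneg, sub_inf]
      refine sup_le ?_ (by simpa using hl)
      have : s₁ ≤ k + l := hss ▸ le_add_of_nonneg_right hs₂
      simpa [sub_le_iff_le_add, add_comm] using this
    have m₁ : P₁ (k ⊓ s₁) + P₂ (k - k ⊓ s₁) ∈ splitSet P₁ P₂ k :=
      ⟨_, _, hk₁0, hk₂0, by abel, rfl⟩
    have m₂ : P₁ (s₁ - k ⊓ s₁) + P₂ (l - (s₁ - k ⊓ s₁)) ∈ splitSet P₁ P₂ l :=
      ⟨_, _, hl₁0, hl₂0, by abel, rfl⟩
    have i₁ := csInf_le (splitSet_bddBelow h₁ h₂ k) m₁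
    have i₂ := csInf_le (splitSet_bddBelow h₁ h₂ l) m₂
    have key : P₁ (k ⊓ s₁) + P₂ (k - k ⊓ s₁) + (P₁ (s₁ - k ⊓ s₁) + P₂ (l - (s₁ - k ⊓ s₁)))
        = P₁ s₁ + P₂ s₂ := by
      have e₁ : (k ⊓ s₁) + (s₁ - k ⊓ s₁) = s₁ := by abel
      have e₂ : (k - k ⊓ s₁) + (l - (s₁ - k ⊓ s₁)) = s₂ := by
        have : s₂ = k + l - s₁ := by rw [← hss]; abel
        rw [this]; abel
      calc P₁ (k ⊓ s₁) + P₂ (k - k ⊓ s₁) + (P₁ (s₁ - k ⊓ s₁) + P₂ (l - (s₁ - k ⊓ s₁)))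
          = P₁ ((k ⊓ s₁) + (s₁ - k ⊓ s₁)) + P₂ ((k - k ⊓ s₁) + (l - (s₁ - k ⊓ s₁))) := by
            simp only [map_add]; ring
        _ = P₁ s₁ + P₂ s₂ := by rw [e₁, e₂]
    unfold mfun
    linarith

end posmeet
end
section testC
open MeasureTheory BoundedContinuousFunction NormedSpace
variable {Z : Type*} [TopologicalSpace Z] {P₁ P₂ : StrongDual ℝ (Z →ᵇ ℝ)}

lemma exists_meet (h₁ : IsPos P₁) (h₂ : IsPos P₂) :
    ∃ ω : StrongDual ℝ (Z →ᵇ ℝ), IsPos ω ∧ IsPos (P₁ - ω) ∧ IsPos (P₂ - ω) ∧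
      P₁ 1 + P₂ 1 - 2 * ω 1 ≤ ‖P₁ - P₂‖ := by
  set m : (Z →ᵇ ℝ) → ℝ := mfun P₁ P₂ with hm
  have hadd : ∀ k l : Z →ᵇ ℝ,
      m ((k + l) ⊔ 0) - m ((-(k + l)) ⊔ 0)
        = (m (k ⊔ 0) - m ((-k) ⊔ 0)) + (m (l ⊔ 0) - m ((-l) ⊔ 0)) := by
    intro k l
    have hid : (k + l) ⊔ 0 + ((-k) ⊔ 0 + (-l) ⊔ 0)
        = (-(k + l)) ⊔ 0 + (k ⊔ 0 + l ⊔ 0) := by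
      have hc : ∀ c : ℝ, c ⊔ 0 - (-c) ⊔ 0 = c := fun c => by
        rcases le_total c 0 with h | h
        · rw [sup_eq_right.2 h, sup_eq_left.2 (by linarith : (0:ℝ) ≤ -c)]; ring
        · rw [sup_eq_left.2 h, sup_eq_right.2 (by linarith : -c ≤ (0:ℝ))]; ring
      ext x
      simp only [BoundedContinuousFunction.coe_add, BoundedContinuousFunction.coe_sup,
        BoundedContinuousFunction.coe_neg, BoundedContinuousFunction.coe_zero,
        Pi.add_apply, Pi.sup_apply, Pi.neg_apply, Pi.zero_apply]
      linarith [hc (k x + l x), hc (k x), hc (l x)]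
    have L : m ((k + l) ⊔ 0 + ((-k) ⊔ 0 + (-l) ⊔ 0))
        = m ((k + l) ⊔ 0) + (m ((-k) ⊔ 0) + m ((-l) ⊔ 0)) := by
      rw [hm, mfun_add h₁ h₂ (sup_zero_nonneg _) (add_nonneg (sup_zero_nonneg _) (sup_zero_nonneg _)),
        mfun_add h₁ h₂ (sup_zero_nonneg _) (sup_zero_nonneg _)]
    have Rr : m ((-(k + l)) ⊔ 0 + (k ⊔ 0 + l ⊔ 0))
        = m ((-(k + l)) ⊔ 0) + (m (k ⊔ 0) + m (l ⊔ 0)) := by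
      rw [hm, mfun_add h₁ h₂ (sup_zero_nonneg _) (add_nonneg (sup_zero_nonneg _) (sup_zero_nonneg _)),
        mfun_add h₁ h₂ (sup_zero_nonneg _) (sup_zero_nonneg _)]
    have := congrArg m hid
    rw [L, Rr] at this
    linarith
  set W : (Z →ᵇ ℝ) →+ ℝ := AddMonoidHom.mk' (fun k => m (k ⊔ 0) - m ((-k) ⊔ 0)) hadd with hW
  have hbound : ∀ k : Z →ᵇ ℝ, |W k| ≤ P₁ 1 * ‖k‖ := by
    intro k
    have n₁ : 0 ≤ m (k ⊔ 0) := mfun_nonneg h₁ h₂ (sup_zero_nonneg _)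
    have n₂ : 0 ≤ m ((-k) ⊔ 0) := mfun_nonneg h₁ h₂ (sup_zero_nonneg _)
    have u₁ : m (k ⊔ 0) ≤ P₁ 1 * ‖k‖ := by
      refine (mfun_le_left h₁ h₂ (sup_zero_nonneg _)).trans ?_
      refine (h₁.apply_le _).trans ?_
      exact mul_le_mul_of_nonneg_left (norm_sup_zero_le k) h₁.one_nonneg
    have u₂ : m ((-k) ⊔ 0) ≤ P₁ 1 * ‖k‖ := by
      refine (mfun_le_left h₁ h₂ (sup_zero_nonneg _)).trans ?_
      refine (h₁.apply_le _).trans ?_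
      have := mul_le_mul_of_nonneg_left (norm_sup_zero_le (-k)) h₁.one_nonneg
      rwa [norm_neg] at this
    have : W k = m (k ⊔ 0) - m ((-k) ⊔ 0) := rfl
    rw [this, abs_le]
    constructor <;> linarith
  have hlip : LipschitzWith (Real.toNNReal (P₁ 1)) W := by
    refine LipschitzWith.of_dist_le_mul fun k l => ?_
    have : W k - W l = W (k - l) := (map_sub W k l).symm
    rw [Real.dist_eq, this, dist_eq_norm]
    refine (hbound _).trans ?_
    gcongr
    exact le_max_left _ _
  set ω : (Z →ᵇ ℝ) →L[ℝ] ℝ := AddMonoidHom.toRealLinearMap W hlip.continuous with hω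
  have hωapp : ∀ k, ω k = m (k ⊔ 0) - m ((-k) ⊔ 0) := fun k => rfl
  have hωpos : ∀ k : Z →ᵇ ℝ, 0 ≤ k → ω k = m k := by
    intro k hk
    rw [hωapp, sup_zero_of_nonneg hk, sup_eq_right.2 (neg_nonpos.2 hk), hm, mfun_zero h₁ h₂]
    ring
  refine ⟨ω, ?_, ?_, ?_, ?_⟩
  · intro k hk; rw [hωpos k hk]; exact mfun_nonneg h₁ h₂ hk
  · intro k hk
    simp only [ContinuousLinearMap.sub_apply]
    rw [hωpos k hk]; linarith [mfun_le_left h₁ h₂ hk]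
  · intro k hk
    simp only [ContinuousLinearMap.sub_apply]
    rw [hωpos k hk]; linarith [mfun_le_right h₁ h₂ hk]
  · have h1 : (0 : Z →ᵇ ℝ) ≤ 1 := fun x => by simp
    rw [hωpos 1 h1]
    have : (P₁ 1 + P₂ 1 - ‖P₁ - P₂‖) / 2 ≤ m 1 := by
      refine le_csInf (splitSet_nonempty h1) ?_
      rintro r ⟨k₁, k₂, hk₁, hk₂, hsum, rfl⟩
      have hnorm : ‖k₂ - k₁‖ ≤ 1 := by
        refine (norm_le zero_le_one).2 fun x => ?_
        have hx : k₁ x + k₂ x = 1 := by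
          have := congrArg (fun f : Z →ᵇ ℝ => f x) hsum
          simpa using this
        have := hk₁ x; have := hk₂ x
        simp only [BoundedContinuousFunction.coe_sub, Pi.sub_apply, Real.norm_eq_abs] at *
        rw [abs_le]
        constructor <;> simp_all <;> linarith
      have hval : (P₁ - P₂) (k₂ - k₁) ≤ ‖P₁ - P₂‖ := by
        calc (P₁ - P₂) (k₂ - k₁) ≤ ‖P₁ - P₂‖ * ‖k₂ - k₁‖ := le_trans (le_abs_self _)
              ((P₁ - P₂).le_opNorm _)
        _ ≤ ‖P₁ - P₂‖ * 1 := by gcongr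
        _ = ‖P₁ - P₂‖ := mul_one _
      have hexp : (P₁ - P₂) (k₂ - k₁) = P₁ 1 + P₂ 1 - 2 * (P₁ k₁ + P₂ k₂) := by
        have e₁ : P₁ 1 = P₁ k₁ + P₁ k₂ := by rw [← hsum]; simp
        have e₂ : P₂ 1 = P₂ k₁ + P₂ k₂ := by rw [← hsum]; simp
        simp only [ContinuousLinearMap.sub_apply, map_sub]
        rw [e₁, e₂]; ring
      linarith
    linarith
end testC
section testD
open MeasureTheory BoundedContinuousFunction NormedSpace
variable {Z : Type*} [TopologicalSpace Z]

set_option maxHeartbeats 1000000 in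
lemma dualTrunc {R : ℝ} (hR : 0 < R) (lam : StrongDual ℝ (Z →ᵇ ℝ))
    (hlamp : IsPos lam) (hlam1 : lam 1 = 1) (ψ : StrongDual ℝ (Z →ᵇ ℝ) → ℝ)
    (hlb : ∀ ζ, IsPos ζ → -(R * ζ 1) ≤ ψ ζ)
    (hub : ∀ ζ, IsPos ζ → ψ ζ ≤ 2 * R * ζ 1)
    (hsuper : ∀ ζ₁ ζ₂, IsPos ζ₁ → IsPos ζ₂ → ψ ζ₁ + ψ ζ₂ ≤ ψ (ζ₁ + ζ₂))
    (hsub : ∀ ζ₁ ζ₂, IsPos ζ₁ → IsPos ζ₂ → ψ (ζ₁ + ζ₂) ≤ ψ ζ₁ + ψ ζ₂)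
    (hhom : ∀ c : ℝ, 0 < c → ∀ ζ, IsPos ζ → ψ (c • ζ) = c * ψ ζ)
    (hlam0 : ψ lam ≤ 0) :
    ∃ c' : StrongDual ℝ (StrongDual ℝ (Z →ᵇ ℝ)), ‖c'‖ ≤ 3 * R ∧ c' lam = 0 ∧
      ∀ ζ, IsPos ζ → ψ ζ ≤ c' ζ := by
  have hψ0 : ψ 0 = 0 := by
    have h1 := hub 0 isPos_zero
    have h2 := hlb 0 isPos_zero
    simp only [ContinuousLinearMap.zero_apply, mul_zero, neg_zero] at h1 h2
    linarith
  -- the key geometric estimate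
  have K1 : ∀ ρ : StrongDual ℝ (Z →ᵇ ℝ), IsPos ρ → ∀ t : ℝ, ψ ρ ≤ 3 * R * ‖ρ - t • lam‖ := by
    intro ρ hρ t
    have hmass : (ρ - t • lam) 1 = ρ 1 - t := by
      simp [hlam1]
    have habs : |(ρ - t • lam) 1| ≤ ‖ρ - t • lam‖ := by
      have h0 := ((ρ - t • lam).le_opNorm 1).trans
        (mul_le_of_le_one_right (norm_nonneg _) one_norm_le)
      rwa [Real.norm_eq_abs] at h0
    rcases le_or_gt t 0 with ht | ht
    · have h1 : ρ 1 ≤ ‖ρ - t • lam‖ := by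
        have : ρ 1 ≤ |(ρ - t • lam) 1| := by
          rw [hmass]
          exact le_trans (by linarith [hρ.one_nonneg]) (le_abs_self _)
        linarith
      have := hub ρ hρ
      nlinarith [hρ.one_nonneg, norm_nonneg (ρ - t • lam)]
    · obtain ⟨ω, hω, hρω, hlω, hmassineq⟩ := exists_meet hρ (hlamp.smul ht.le)
      have htl1 : (t • lam) 1 = t := by simp [hlam1]
      have s1 : ψ ρ ≤ ψ ω + ψ (ρ - ω) := by
        have e : ω + (ρ - ω) = ρ := by abel
        calc ψ ρ = ψ (ω + (ρ - ω)) := by rw [e]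
        _ ≤ ψ ω + ψ (ρ - ω) := hsub _ _ hω hρω
      have s2 : ψ (ρ - ω) ≤ 2 * R * ((ρ - ω) 1) := hub _ hρω
      have s3 : ψ ω + ψ (t • lam - ω) ≤ t * ψ lam := by
        have e : ω + (t • lam - ω) = t • lam := by abel
        calc ψ ω + ψ (t • lam - ω) ≤ ψ (ω + (t • lam - ω)) := hsuper _ _ hω hlω
        _ = ψ (t • lam) := by rw [e]
        _ = t * ψ lam := hhom t ht lam hlamp
      have s4 : -(R * ((t • lam - ω) 1)) ≤ ψ (t • lam - ω) := hlb _ hlω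
      have d1 : (0:ℝ) ≤ (ρ - ω) 1 := hρω 1 (fun x => by simp)
      have d2 : (0:ℝ) ≤ (t • lam - ω) 1 := hlω 1 (fun x => by simp)
      have e1 : (ρ - ω) 1 = ρ 1 - ω 1 := by simp
      have e2 : (t • lam - ω) 1 = t - ω 1 := by simp [hlam1]
      have hts : t * ψ lam ≤ 0 := by
        rcases le_or_gt (ψ lam) 0 with h | h
        · exact mul_nonpos_of_nonneg_of_nonpos ht.le hlam0
        · linarith
      have hM : ρ 1 + t - 2 * ω 1 ≤ ‖ρ - t • lam‖ := by
        rw [htl1] at hmassineq; linarith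
      have hMn : (0:ℝ) ≤ ‖ρ - t • lam‖ := norm_nonneg _
      nlinarith [s1, s2, s3, s4, d1, d2, e1, e2, hM, hR.le]
  -- the sublinear functional
  set S : StrongDual ℝ (Z →ᵇ ℝ) → Set ℝ :=
    fun ζ => {r | ∃ (ρ : StrongDual ℝ (Z →ᵇ ℝ)) (t : ℝ), IsPos ρ ∧ r = 3 * R * ‖ζ + ρ - t • lam‖ - ψ ρ} with hS
  have hmem0 : ∀ ζ, 3 * R * ‖ζ‖ ∈ S ζ := fun ζ =>
    ⟨0, 0, isPos_zero, by simp [hψ0]⟩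
  have hSne : ∀ ζ, (S ζ).Nonempty := fun ζ => ⟨_, hmem0 ζ⟩
  have hlow : ∀ ζ, ∀ r ∈ S ζ, -(3 * R * ‖ζ‖) ≤ r := by
    rintro ζ r ⟨ρ, t, hρ, rfl⟩
    have h1 : ψ ρ ≤ 3 * R * ‖ρ - t • lam‖ := K1 ρ hρ t
    have h2 : ‖ρ - t • lam‖ ≤ ‖ζ + ρ - t • lam‖ + ‖ζ‖ := by
      have e : ρ - t • lam = (ζ + ρ - t • lam) - ζ := by abel
      rw [e]; exact norm_sub_le _ _
    nlinarith [norm_nonneg (ζ + ρ - t • lam), norm_nonneg ζ, hR.le]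
  have hbdd : ∀ ζ, BddBelow (S ζ) := fun ζ => ⟨_, fun r hr => hlow ζ r hr⟩
  set q : StrongDual ℝ (Z →ᵇ ℝ) → ℝ := fun ζ => sInf (S ζ) with hq
  have hqle : ∀ ζ, q ζ ≤ 3 * R * ‖ζ‖ := fun ζ => csInf_le (hbdd ζ) (hmem0 ζ)
  have hqspan : ∀ u : ℝ, 0 ≤ q (u • lam) := by
    intro u
    refine le_csInf (hSne _) ?_
    rintro r ⟨ρ, t, hρ, rfl⟩
    have e : u • lam + ρ - t • lam = ρ - (t - u) • lam := by
      module
    rw [e]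
    linarith [K1 ρ hρ (t - u)]
  have hqsub : ∀ ζ₁ ζ₂, q (ζ₁ + ζ₂) ≤ q ζ₁ + q ζ₂ := by
    intro ζ₁ ζ₂
    refine sInf_add_sInf (hSne ζ₁) (hSne ζ₂) (hbdd ζ₂) ?_
    rintro r₁ ⟨ρ₁, t₁, hρ₁, rfl⟩ r₂ ⟨ρ₂, t₂, hρ₂, rfl⟩
    have hmem : 3 * R * ‖(ζ₁ + ζ₂) + (ρ₁ + ρ₂) - (t₁ + t₂) • lam‖ - ψ (ρ₁ + ρ₂) ∈ S (ζ₁ + ζ₂) :=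
      ⟨ρ₁ + ρ₂, t₁ + t₂, hρ₁.add hρ₂, rfl⟩
    have h1 := csInf_le (hbdd (ζ₁ + ζ₂)) hmem
    have h2 : ‖(ζ₁ + ζ₂) + (ρ₁ + ρ₂) - (t₁ + t₂) • lam‖
        ≤ ‖ζ₁ + ρ₁ - t₁ • lam‖ + ‖ζ₂ + ρ₂ - t₂ • lam‖ := by
      have e : (ζ₁ + ζ₂) + (ρ₁ + ρ₂) - (t₁ + t₂) • lam
          = (ζ₁ + ρ₁ - t₁ • lam) + (ζ₂ + ρ₂ - t₂ • lam) := by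
        rw [add_smul]; abel
      rw [e]; exact norm_add_le _ _
    have h3 := hsuper ρ₁ ρ₂ hρ₁ hρ₂
    have : q (ζ₁ + ζ₂) ≤ 3 * R * ‖(ζ₁ + ζ₂) + (ρ₁ + ρ₂) - (t₁ + t₂) • lam‖ - ψ (ρ₁ + ρ₂) := h1
    nlinarith [hR.le]
  have hqhomle : ∀ c : ℝ, 0 < c → ∀ ζ, q (c • ζ) ≤ c * q ζ := by
    intro c hc ζ
    have : ∀ r ∈ S ζ, q (c • ζ) ≤ c * r := by
      rintro r ⟨ρ, t, hρ, rfl⟩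
      have hmem : 3 * R * ‖c • ζ + c • ρ - (c * t) • lam‖ - ψ (c • ρ) ∈ S (c • ζ) :=
        ⟨c • ρ, c * t, hρ.smul hc.le, rfl⟩
      have h1 := csInf_le (hbdd (c • ζ)) hmem
      have e : c • ζ + c • ρ - (c * t) • lam = c • (ζ + ρ - t • lam) := by
        rw [mul_smul]; rw [smul_sub, smul_add]
      have e2 : ‖c • ζ + c • ρ - (c * t) • lam‖ = c * ‖ζ + ρ - t • lam‖ := by
        rw [e, norm_smul, Real.norm_eq_abs, abs_of_pos hc]
      rw [e2, hhom c hc ρ hρ] at h1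
      calc q (c • ζ) ≤ 3 * R * (c * ‖ζ + ρ - t • lam‖) - c * ψ ρ := h1
      _ = c * (3 * R * ‖ζ + ρ - t • lam‖ - ψ ρ) := by ring
    have h2 : q (c • ζ) / c ≤ q ζ := by
      refine le_csInf (hSne ζ) fun r hr => ?_
      rw [div_le_iff₀ hc, mul_comm]
      exact this r hr
    calc q (c • ζ) = c * (q (c • ζ) / c) := by field_simp
    _ ≤ c * q ζ := by exact mul_le_mul_of_nonneg_left h2 hc.le
  have hqhom : ∀ c : ℝ, 0 < c → ∀ ζ, q (c • ζ) = c * q ζ := by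
    intro c hc ζ
    refine le_antisymm (hqhomle c hc ζ) ?_
    have h1 := hqhomle c⁻¹ (by positivity) (c • ζ)
    rw [inv_smul_smul₀ (ne_of_gt hc)] at h1
    calc c * q ζ ≤ c * (c⁻¹ * q (c • ζ)) := by
          exact mul_le_mul_of_nonneg_left h1 hc.le
    _ = q (c • ζ) := by field_simp
  -- Hahn-Banach
  set f : (StrongDual ℝ (Z →ᵇ ℝ)) →ₗ.[ℝ] ℝ := ⟨Submodule.span ℝ {lam}, 0⟩ with hf
  have hfle : ∀ x : f.domain, f x ≤ q x := by
    intro x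
    have hx : (x : StrongDual ℝ (Z →ᵇ ℝ)) ∈ Submodule.span ℝ ({lam} : Set (StrongDual ℝ (Z →ᵇ ℝ))) := x.2
    obtain ⟨u, hu⟩ := Submodule.mem_span_singleton.1 hx
    have : f x = 0 := rfl
    rw [this, ← hu]
    exact hqspan u
  obtain ⟨g, hg1, hg2⟩ := exists_extension_of_le_sublinear f q hqhom hqsub hfle
  have hgabs : ∀ ζ, ‖g ζ‖ ≤ 3 * R * ‖ζ‖ := by
    intro ζ
    rw [Real.norm_eq_abs, abs_le]
    constructor
    · have := (hg2 (-ζ)).trans (hqle (-ζ))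
      rw [map_neg, norm_neg] at this
      linarith
    · exact (hg2 ζ).trans (hqle ζ)
  refine ⟨g.mkContinuous (3 * R) hgabs, ?_, ?_, ?_⟩
  · exact LinearMap.mkContinuous_norm_le g (by positivity) hgabs
  · have := hg1 ⟨lam, Submodule.mem_span_singleton_self lam⟩
    exact this
  · intro ζ hζ
    have hmem : 3 * R * ‖-ζ + ζ - (0:ℝ) • lam‖ - ψ ζ ∈ S (-ζ) := ⟨ζ, 0, hζ, rfl⟩
    have h1 := csInf_le (hbdd (-ζ)) hmem
    have e : -ζ + ζ - (0:ℝ) • lam = 0 := by simp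
    rw [e, norm_zero, mul_zero, zero_sub] at h1
    have h2 : g (-ζ) ≤ q (-ζ) := hg2 (-ζ)
    have h3 : q (-ζ) ≤ -ψ ζ := h1
    have : g (-ζ) = -(g ζ) := by rw [map_neg]
    have hfinal : ψ ζ ≤ g ζ := by linarith [this ▸ h2]
    simpa using hfinal
end testD
section testE
open MeasureTheory BoundedContinuousFunction NormedSpace

lemma smul_sup_zero {Z : Type*} [TopologicalSpace Z] {c : ℝ} (hc : 0 < c) (g : Z →ᵇ ℝ) :
    (c • g) ⊔ 0 = c • (g ⊔ 0) := by
  ext x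
  simp only [coe_sup, coe_smul, Pi.sup_apply, Pi.smul_apply, coe_zero, Pi.zero_apply,
    smul_eq_mul]
  rcases le_total (g x) 0 with h | h
  · rw [sup_eq_right.2 (by nlinarith : c * g x ≤ (0:ℝ)), sup_eq_right.2 h, mul_zero]
  · rw [sup_eq_left.2 (by positivity : (0:ℝ) ≤ c * g x), sup_eq_left.2 h]

lemma exists_lift {Z W : Type*} [TopologicalSpace Z] [TopologicalSpace W]
    (e : (Z →ᵇ ℝ) →L[ℝ] (W →ᵇ ℝ)) (hinj : Function.Injective e)
    (hlat : ∀ h : Z →ᵇ ℝ, e (h ⊔ 0) = (e h) ⊔ 0)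
    (η : StrongDual ℝ (W →ᵇ ℝ)) (hη : IsPos η)
    (ξ : StrongDual ℝ (Z →ᵇ ℝ)) (hξ : IsPos ξ)
    (hle : ∀ h : Z →ᵇ ℝ, 0 ≤ h → ξ h ≤ η (e h)) :
    ∃ ω : StrongDual ℝ (W →ᵇ ℝ), IsPos ω ∧ IsPos (η - ω) ∧ ω.comp e = ξ := by
  set N : (W →ᵇ ℝ) → ℝ := fun g => η (g ⊔ 0) with hN
  have hNhom : ∀ c : ℝ, 0 < c → ∀ g, N (c • g) = c * N g := by
    intro c hc g
    rw [hN]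
    simp only
    rw [smul_sup_zero hc, _root_.map_smul, smul_eq_mul]
  have hNsub : ∀ g g', N (g + g') ≤ N g + N g' := by
    intro g g'
    have hp : (g + g') ⊔ 0 ≤ g ⊔ 0 + g' ⊔ 0 := by
      intro x
      show ((g + g') ⊔ 0) x ≤ (g ⊔ 0 + g' ⊔ 0) x
      simp only [coe_add, coe_sup, Pi.add_apply, Pi.sup_apply, coe_zero, Pi.zero_apply]
      rcases le_total (g x + g' x) 0 with h | h
      · rw [sup_eq_right.2 h]
        exact add_nonneg le_sup_right le_sup_right
      · rw [sup_eq_left.2 h]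
        exact add_le_add le_sup_left le_sup_left
    calc N (g + g') = η ((g + g') ⊔ 0) := rfl
    _ ≤ η (g ⊔ 0 + g' ⊔ 0) := hη.mono hp
    _ = N g + N g' := by rw [map_add]
  have hinj' : Function.Injective (e : (Z →ᵇ ℝ) →ₗ[ℝ] (W →ᵇ ℝ)) := hinj
  set equiv := LinearEquiv.ofInjective (e : (Z →ᵇ ℝ) →ₗ[ℝ] (W →ᵇ ℝ)) hinj' with hequiv
  set f : (W →ᵇ ℝ) →ₗ.[ℝ] ℝ :=
    ⟨LinearMap.range (e : (Z →ᵇ ℝ) →ₗ[ℝ] (W →ᵇ ℝ)),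
      (ξ : (Z →ᵇ ℝ) →ₗ[ℝ] ℝ).comp (equiv.symm : _ →ₗ[ℝ] _)⟩ with hf
  have hval : ∀ (h : Z →ᵇ ℝ) (hm : e h ∈ LinearMap.range (e : (Z →ᵇ ℝ) →ₗ[ℝ] (W →ᵇ ℝ))),
      f ⟨e h, hm⟩ = ξ h := by
    intro h hm
    have h1 : equiv.symm ⟨e h, hm⟩ = h := by
      apply hinj'
      have h2 : (equiv (equiv.symm ⟨e h, hm⟩) : W →ᵇ ℝ) = ((⟨e h, hm⟩ : LinearMap.range (e : (Z →ᵇ ℝ) →ₗ[ℝ] (W →ᵇ ℝ))) : W →ᵇ ℝ) := by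
        rw [equiv.apply_symm_apply]
      rw [LinearEquiv.ofInjective_apply] at h2
      exact h2
    show ξ (equiv.symm ⟨e h, hm⟩) = ξ h
    rw [h1]
  have hfle : ∀ x : f.domain, f x ≤ N x := by
    intro x
    obtain ⟨h, hh⟩ := x.2
    have hx : (x : W →ᵇ ℝ) = e h := hh.symm
    have hxeq : x = ⟨e h, ⟨h, rfl⟩⟩ := Subtype.ext hx
    rw [hxeq, hval h ⟨h, rfl⟩]
    have step1 : ξ h ≤ ξ (h ⊔ 0) := hξ.mono le_sup_left
    have step2 : ξ (h ⊔ 0) ≤ η (e (h ⊔ 0)) := hle _ (sup_zero_nonneg _)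
    have step3 : η (e (h ⊔ 0)) = N (e h) := by rw [hlat, hN]
    show ξ h ≤ N (e h)
    linarith
  obtain ⟨g, hg1, hg2⟩ := exists_extension_of_le_sublinear f N hNhom hNsub hfle
  have hgabs : ∀ v, ‖g v‖ ≤ η 1 * ‖v‖ := by
    intro v
    rw [Real.norm_eq_abs, abs_le]
    constructor
    · have h1 : g (-v) ≤ η 1 * ‖v‖ := by
        refine (hg2 (-v)).trans ?_
        calc N (-v) = η ((-v) ⊔ 0) := rfl
        _ ≤ η 1 * ‖(-v) ⊔ 0‖ := hη.apply_le _
        _ ≤ η 1 * ‖v‖ := by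
            have h2 := (norm_sup_zero_le (-v)).trans (norm_neg v).le
            exact mul_le_mul_of_nonneg_left h2 hη.one_nonneg
      rw [map_neg] at h1
      linarith
    · calc g v ≤ N v := hg2 v
      _ = η (v ⊔ 0) := rfl
      _ ≤ η 1 * ‖v ⊔ 0‖ := hη.apply_le _
      _ ≤ η 1 * ‖v‖ := mul_le_mul_of_nonneg_left (norm_sup_zero_le v) hη.one_nonneg
  refine ⟨g.mkContinuous (η 1) hgabs, ?_, ?_, ?_⟩
  · intro v hv
    have h1 : g (-v) ≤ N (-v) := hg2 (-v)
    have h2 : N (-v) = 0 := by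
      have : (-v) ⊔ 0 = 0 := sup_eq_right.2 (neg_nonpos.2 hv)
      calc N (-v) = η ((-v) ⊔ 0) := rfl
      _ = η 0 := by rw [this]
      _ = 0 := map_zero η
    have h3 : g (-v) = -(g v) := map_neg g v
    show (0:ℝ) ≤ g v
    linarith [h3 ▸ h2 ▸ h1]
  · intro v hv
    have h1 : g v ≤ N v := hg2 v
    have h2 : N v = η v := by
      rw [hN]; simp only; rw [sup_zero_of_nonneg hv]
    show (0:ℝ) ≤ η v - g v
    have : g v ≤ η v := h2 ▸ h1
    linarith
  · ext h
    show g (e h) = ξ h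
    have hm : e h ∈ f.domain := ⟨h, rfl⟩
    have := hg1 ⟨e h, hm⟩
    rw [this, hval h hm]
end testE
section testF
open MeasureTheory BoundedContinuousFunction NormedSpace

-- generic averaging over the second coordinate
variable {A B : Type*} [TopologicalSpace A] [FirstCountableTopology A] [TopologicalSpace B]
  [MeasurableSpace B] [OpensMeasurableSpace B] (ν : Measure B) [IsProbabilityMeasure ν]

def sliceR (f : (A × B) →ᵇ ℝ) (a : A) : B →ᵇ ℝ :=
  f.compContinuous ⟨fun b => (a, b), continuous_const.prodMk continuous_id⟩

lemma integral_slice_cont (f : (A × B) →ᵇ ℝ) : Continuous fun a => ∫ b, f (a, b) ∂ν := by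
  apply continuous_of_dominated (bound := fun _ => ‖f‖)
  · intro a
    exact (f.continuous.comp (continuous_const.prodMk continuous_id)).aestronglyMeasurable
  · intro a
    exact Filter.Eventually.of_forall fun b => f.norm_coe_le_norm (a, b)
  · exact integrable_const _
  · exact Filter.Eventually.of_forall fun b =>
      f.continuous.comp (continuous_id.prodMk continuous_const)

def avgR : ((A × B) →ᵇ ℝ) →L[ℝ] (A →ᵇ ℝ) :=
  LinearMap.mkContinuous
    { toFun := fun f => BoundedContinuousFunction.ofNormedAddCommGroup
        (fun a => ∫ b, f (a, b) ∂ν) (integral_slice_cont ν f) ‖f‖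
        (fun a => by
          have h := norm_integral_le_of_norm_le_const (μ := ν)
            (Filter.Eventually.of_forall fun b => f.norm_coe_le_norm (a, b))
          simpa [measure_univ] using h)
      map_add' := fun f g => by
        ext a
        simp only [coe_ofNormedAddCommGroup, BoundedContinuousFunction.coe_add, Pi.add_apply]
        have h1 : Integrable (fun b => f (a, b)) ν := (sliceR f a).integrable ν
        have h2 : Integrable (fun b => g (a, b)) ν := (sliceR g a).integrable ν
        exact integral_add h1 h2
      map_smul' := fun r f => by
        ext a
        simp only [coe_ofNormedAddCommGroup, BoundedContinuousFunction.coe_smul, Pi.smul_apply,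
          RingHom.id_apply, smul_eq_mul]
        exact integral_smul r (fun b => f (a, b)) }
    1
    (fun f => by
      rw [one_mul]
      exact norm_ofNormedAddCommGroup_le _ (norm_nonneg f)
        (fun a => by
          have h := norm_integral_le_of_norm_le_const (μ := ν)
            (Filter.Eventually.of_forall fun b => f.norm_coe_le_norm (a, b))
          simpa [measure_univ] using h))

lemma avgR_apply (f : (A × B) →ᵇ ℝ) (a : A) : avgR ν f a = ∫ b, f (a, b) ∂ν := rfl

lemma avgR_norm_le (f : (A × B) →ᵇ ℝ) : ‖avgR ν f‖ ≤ ‖f‖ := by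
  have := (avgR (A := A) ν).le_opNorm f
  have h2 : ‖avgR (A := A) ν‖ ≤ 1 := LinearMap.mkContinuous_norm_le _ zero_le_one _
  nlinarith [norm_nonneg f, norm_nonneg (avgR ν f)]

lemma avgR_pos {f : (A × B) →ᵇ ℝ} (hf : 0 ≤ f) : 0 ≤ avgR ν f := by
  intro a
  show (0:ℝ) ≤ avgR ν f a
  rw [avgR_apply]
  exact integral_nonneg fun b => hf (a, b)

-- swap
def swapCLM : ((A × B) →ᵇ ℝ) →L[ℝ] ((B × A) →ᵇ ℝ) :=
  LinearMap.mkContinuous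
    { toFun := fun f => f.compContinuous ⟨Prod.swap, continuous_swap⟩
      map_add' := fun f g => by ext z; simp [compContinuous_apply]
      map_smul' := fun r f => by ext z; simp [compContinuous_apply] }
    1 (fun f => by simpa using f.norm_compContinuous_le ⟨Prod.swap, continuous_swap⟩)

lemma swapCLM_apply (f : (A × B) →ᵇ ℝ) (z : B × A) : swapCLM f z = f z.swap := rfl

lemma swapCLM_norm_le (f : (A × B) →ᵇ ℝ) : ‖swapCLM f‖ ≤ ‖f‖ := by
  have := (swapCLM (A := A) (B := B)).le_opNorm f
  have h2 : ‖swapCLM (A := A) (B := B)‖ ≤ 1 := LinearMap.mkContinuous_norm_le _ zero_le_one _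
  nlinarith [norm_nonneg f, norm_nonneg (swapCLM f)]

lemma swapCLM_pos {f : (A × B) →ᵇ ℝ} (hf : 0 ≤ f) : 0 ≤ swapCLM f := fun z => hf z.swap

end testF

section testG
open MeasureTheory BoundedContinuousFunction NormedSpace

variable {d : ℕ} {X Y : Set (EuclideanSpace ℝ (Fin d))}

lemma extX_apply (h : ↥X →ᵇ ℝ) (z : ↥X × ↥Y) : extX h z = h z.1 := rfl
lemma extY_apply (g : ↥Y →ᵇ ℝ) (z : ↥X × ↥Y) : extY g z = g z.2 := rfl

lemma extX_one : extX (X := X) (Y := Y) 1 = 1 := by ext z; rfl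
lemma extY_one : extY (X := X) (Y := Y) 1 = 1 := by ext z; rfl

lemma extX_sup_zero (h : ↥X →ᵇ ℝ) :
    extX (X := X) (Y := Y) (h ⊔ 0) = extX h ⊔ 0 := by
  ext z
  show (h ⊔ 0) z.1 = (extX h ⊔ 0) z
  simp only [BoundedContinuousFunction.coe_sup, BoundedContinuousFunction.coe_zero,
    Pi.sup_apply, Pi.zero_apply]
  rfl

lemma extY_sup_zero (g : ↥Y →ᵇ ℝ) :
    extY (X := X) (Y := Y) (g ⊔ 0) = extY g ⊔ 0 := by
  ext z
  show (g ⊔ 0) z.2 = (extY g ⊔ 0) z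
  simp only [BoundedContinuousFunction.coe_sup, BoundedContinuousFunction.coe_zero,
    Pi.sup_apply, Pi.zero_apply]
  rfl

lemma extX_nonneg {h : ↥X →ᵇ ℝ} (hh : 0 ≤ h) : 0 ≤ extX (X := X) (Y := Y) h :=
  fun z => hh z.1
lemma extY_nonneg {g : ↥Y →ᵇ ℝ} (hg : 0 ≤ g) : 0 ≤ extY (X := X) (Y := Y) g :=
  fun z => hg z.2

lemma extX_inj [Nonempty ↥Y] : Function.Injective (extX (X := X) (Y := Y)) := by
  intro h h' he
  ext x
  obtain ⟨y⟩ := (by infer_instance : Nonempty ↥Y)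
  have := congrArg (fun f : (↥X × ↥Y) →ᵇ ℝ => f (x, y)) he
  exact this

lemma extY_inj [Nonempty ↥X] : Function.Injective (extY (X := X) (Y := Y)) := by
  intro g g' he
  ext y
  obtain ⟨x⟩ := (by infer_instance : Nonempty ↥X)
  have := congrArg (fun f : (↥X × ↥Y) →ᵇ ℝ => f (x, y)) he
  exact this

lemma norm_extX_le (h : ↥X →ᵇ ℝ) : ‖extX (X := X) (Y := Y) h‖ ≤ ‖h‖ := by
  exact h.norm_compContinuous_le (ContinuousMap.fst (α := ↥X) (β := ↥Y))

lemma norm_extY_le (g : ↥Y →ᵇ ℝ) : ‖extY (X := X) (Y := Y) g‖ ≤ ‖g‖ := by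
  exact g.norm_compContinuous_le (ContinuousMap.snd (α := ↥X) (β := ↥Y))

lemma norm_comp_extX_le (η : StrongDual ℝ ((↥X × ↥Y) →ᵇ ℝ)) : ‖η.comp extX‖ ≤ ‖η‖ := by
  refine ContinuousLinearMap.opNorm_le_bound _ (norm_nonneg η) fun h => ?_
  calc ‖η (extX h)‖ ≤ ‖η‖ * ‖extX h‖ := η.le_opNorm _
  _ ≤ ‖η‖ * ‖h‖ := mul_le_mul_of_nonneg_left (norm_extX_le h) (norm_nonneg η)

lemma norm_comp_extY_le (η : StrongDual ℝ ((↥X × ↥Y) →ᵇ ℝ)) : ‖η.comp extY‖ ≤ ‖η‖ := by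
  refine ContinuousLinearMap.opNorm_le_bound _ (norm_nonneg η) fun g => ?_
  calc ‖η (extY g)‖ ≤ ‖η‖ * ‖extY g‖ := η.le_opNorm _
  _ ≤ ‖η‖ * ‖g‖ := mul_le_mul_of_nonneg_left (norm_extY_le g) (norm_nonneg η)

lemma comp_extX_pos {η : StrongDual ℝ ((↥X × ↥Y) →ᵇ ℝ)} (hη : IsPos η) : IsPos (η.comp extX) :=
  fun h hh => hη _ (extX_nonneg hh)
lemma comp_extY_pos {η : StrongDual ℝ ((↥X × ↥Y) →ᵇ ℝ)} (hη : IsPos η) : IsPos (η.comp extY) :=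
  fun g hg => hη _ (extY_nonneg hg)

lemma comp_extX_one (η : StrongDual ℝ ((↥X × ↥Y) →ᵇ ℝ)) : (η.comp extX) 1 = η 1 := by
  show η (extX 1) = η 1
  rw [extX_one]
lemma comp_extY_one (η : StrongDual ℝ ((↥X × ↥Y) →ᵇ ℝ)) : (η.comp extY) 1 = η 1 := by
  show η (extY 1) = η 1
  rw [extY_one]

-- integration functional facts
lemma intCLM_apply {Z : Type*} [TopologicalSpace Z] [MeasurableSpace Z] [OpensMeasurableSpace Z]
    (m : Measure Z) [IsFiniteMeasure m] (h : Z →ᵇ ℝ) : integrationCLM m h = ∫ x, h x ∂m := rfl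

lemma intCLM_pos {Z : Type*} [TopologicalSpace Z] [MeasurableSpace Z] [OpensMeasurableSpace Z]
    (m : Measure Z) [IsFiniteMeasure m] : IsPos (integrationCLM m) := fun k hk =>
  integral_nonneg fun x => hk x

lemma intCLM_one {Z : Type*} [TopologicalSpace Z] [MeasurableSpace Z] [OpensMeasurableSpace Z]
    (m : Measure Z) [IsProbabilityMeasure m] : integrationCLM m 1 = 1 := by
  rw [intCLM_apply]
  simp

-- avgR and extensions
variable (ν : Measure ↥Y) [IsProbabilityMeasure ν]

lemma avgR_extX (h : ↥X →ᵇ ℝ) : avgR ν (extX (X := X) (Y := Y) h) = h := by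
  ext x
  rw [avgR_apply]
  simp [extX_apply, measure_univ]

lemma avgR_extY (g : ↥Y →ᵇ ℝ) :
    avgR ν (extY (X := X) (Y := Y) g) = (integrationCLM ν g) • 1 := by
  ext x
  rw [avgR_apply]
  simp [extY_apply, intCLM_apply]

lemma swap_extY (g : ↥Y →ᵇ ℝ) :
    swapCLM (extY (X := X) (Y := Y) g) = extX (X := Y) (Y := X) g := by
  ext z; rfl

lemma swap_extX (h : ↥X →ᵇ ℝ) :
    swapCLM (extX (X := X) (Y := Y) h) = extY (X := Y) (Y := X) h := by
  ext z; rfl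

-- marginal CLM on duals
def margXCLM : StrongDual ℝ ((↥X × ↥Y) →ᵇ ℝ) →L[ℝ] StrongDual ℝ (↥X →ᵇ ℝ) :=
  LinearMap.mkContinuous
    { toFun := fun η => η.comp extX
      map_add' := fun η η' => ContinuousLinearMap.add_comp _ _ _
      map_smul' := fun r η => ContinuousLinearMap.smul_comp _ _ _ }
    1 (fun η => by simpa using norm_comp_extX_le η)

def margYCLM : StrongDual ℝ ((↥X × ↥Y) →ᵇ ℝ) →L[ℝ] StrongDual ℝ (↥Y →ᵇ ℝ) :=
  LinearMap.mkContinuous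
    { toFun := fun η => η.comp extY
      map_add' := fun η η' => ContinuousLinearMap.add_comp _ _ _
      map_smul' := fun r η => ContinuousLinearMap.smul_comp _ _ _ }
    1 (fun η => by simpa using norm_comp_extY_le η)

lemma margXCLM_apply (η : StrongDual ℝ ((↥X × ↥Y) →ᵇ ℝ)) : margXCLM η = η.comp extX := rfl
lemma margYCLM_apply (η : StrongDual ℝ ((↥X × ↥Y) →ᵇ ℝ)) : margYCLM η = η.comp extY := rfl

-- sSup helper
lemma sSup_add_sSup {S₁ S₂ : Set ℝ} (h₁ : S₁.Nonempty) (h₂ : S₂.Nonempty)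
    (b₂ : BddAbove S₂) {x : ℝ} (h : ∀ r₁ ∈ S₁, ∀ r₂ ∈ S₂, r₁ + r₂ ≤ x) :
    sSup S₁ + sSup S₂ ≤ x := by
  have key : ∀ r₁ ∈ S₁, sSup S₂ ≤ x - r₁ := fun r₁ hr₁ =>
    csSup_le h₂ (fun r₂ hr₂ => by linarith [h r₁ hr₁ r₂ hr₂])
  have h3 : sSup S₁ ≤ x - sSup S₂ :=
    csSup_le h₁ (fun r₁ hr₁ => by linarith [key r₁ hr₁])
  linarith

end testG
set_option maxHeartbeats 1000000 in
theorem stmt9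
    (X Y : Set (EuclideanSpace ℝ (Fin d)))
    (hXcl : IsClosed X) (hXcv : Convex ℝ X) (hYcl : IsClosed Y) (hYcv : Convex ℝ Y)
    (μ : Measure ↥X) [IsProbabilityMeasure μ]
    (ν : Measure ↥Y) [IsProbabilityMeasure ν]
    (R : ℝ) (hR : 0 < R) :
    (Bmu X Y μ + Cnu X Y ν) ∩ Metric.closedBall 0 R ⊆
      (Bmu X Y μ ∩ Metric.closedBall 0 R) + (Cnu X Y ν ∩ Metric.closedBall 0 R) ∧
    (Bmu X Y μ + Cnu X Y ν + Nneg X Y) ∩ Metric.closedBall 0 R ⊆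
      (Bmu X Y μ ∩ Metric.closedBall 0 (3 * R)) +
      (Cnu X Y ν ∩ Metric.closedBall 0 (3 * R)) +
      (Nneg X Y ∩ Metric.closedBall 0 (7 * R)) := by
  have hXne : Nonempty ↥X := by
    by_contra hne
    rw [not_nonempty_iff] at hne
    have h1 : μ Set.univ = 1 := measure_univ
    rw [Set.eq_empty_of_isEmpty Set.univ, measure_empty] at h1
    exact zero_ne_one h1
  have hYne : Nonempty ↥Y := by
    by_contra hne
    rw [not_nonempty_iff] at hne
    have h1 : ν Set.univ = 1 := measure_univ
    rw [Set.eq_empty_of_isEmpty Set.univ, measure_empty] at h1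
    exact zero_ne_one h1
  -- the two lifting maps on dual spaces
    -- Tν ξ := ξ.comp (avgR ν), Tμ ζ := ζ.comp ((avgR μ).comp swapCLM)
  have TnuX : ∀ ξ : StrongDual ℝ (↥X →ᵇ ℝ), (ξ.comp (avgR ν)).comp extX = ξ := by
    intro ξ; ext h
    show ξ (avgR ν (extX h)) = ξ h
    rw [avgR_extX]
  have TnuY : ∀ ξ : StrongDual ℝ (↥X →ᵇ ℝ),
      (ξ.comp (avgR ν)).comp extY = (ξ 1) • integrationCLM ν := by
    intro ξ; ext g
    show ξ (avgR ν (extY g)) = ((ξ 1) • integrationCLM ν) g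
    rw [avgR_extY, _root_.map_smul]
    simp only [ContinuousLinearMap.smul_apply, smul_eq_mul]
    ring
  have TmuY : ∀ ζ : StrongDual ℝ (↥Y →ᵇ ℝ),
      (ζ.comp ((avgR μ).comp swapCLM)).comp extY = ζ := by
    intro ζ; ext g
    show ζ (avgR μ (swapCLM (extY g))) = ζ g
    rw [swap_extY, avgR_extX]
  have TmuX : ∀ ζ : StrongDual ℝ (↥Y →ᵇ ℝ),
      (ζ.comp ((avgR μ).comp swapCLM)).comp extX = (ζ 1) • integrationCLM μ := by
    intro ζ; ext h
    show ζ (avgR μ (swapCLM (extX h))) = ((ζ 1) • integrationCLM μ) h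
    rw [swap_extX, avgR_extY, _root_.map_smul]
    simp only [ContinuousLinearMap.smul_apply, smul_eq_mul]
    ring
  have Tnu_norm : ∀ ξ : StrongDual ℝ (↥X →ᵇ ℝ), ‖ξ.comp (avgR ν)‖ ≤ ‖ξ‖ := by
    intro ξ
    refine ContinuousLinearMap.opNorm_le_bound _ (norm_nonneg ξ) fun f => ?_
    calc ‖ξ (avgR ν f)‖ ≤ ‖ξ‖ * ‖avgR ν f‖ := ξ.le_opNorm _
    _ ≤ ‖ξ‖ * ‖f‖ := mul_le_mul_of_nonneg_left (avgR_norm_le ν f) (norm_nonneg ξ)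
  have Tmu_norm : ∀ ζ : StrongDual ℝ (↥Y →ᵇ ℝ), ‖ζ.comp ((avgR μ).comp swapCLM)‖ ≤ ‖ζ‖ := by
    intro ζ
    refine ContinuousLinearMap.opNorm_le_bound _ (norm_nonneg ζ) fun f => ?_
    calc ‖ζ (avgR μ (swapCLM f))‖ ≤ ‖ζ‖ * ‖avgR μ (swapCLM f)‖ := ζ.le_opNorm _
    _ ≤ ‖ζ‖ * ‖f‖ := by
        refine mul_le_mul_of_nonneg_left ((avgR_norm_le μ _).trans (swapCLM_norm_le f))
          (norm_nonneg ζ)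
  constructor
  · rintro a ⟨hmem, hball⟩
    rw [Set.mem_add] at hmem
    obtain ⟨a₁, ha₁, a₂, ha₂, hsum⟩ := hmem
    obtain ⟨b, hb, hb0⟩ := ha₁
    obtain ⟨c, hc, hc0⟩ := ha₂
    have hnorm : ‖a‖ ≤ R := by rwa [Metric.mem_closedBall, dist_zero_right (E := StrongDual ℝ (StrongDual ℝ ((↥X × ↥Y) →ᵇ ℝ)))] at hball
    have key1 : ∀ η : StrongDual ℝ ((↥X × ↥Y) →ᵇ ℝ),
        a₁ η = a ((η.comp extX).comp (avgR ν)) := by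
      intro η
      have e0 : a ((η.comp extX).comp (avgR ν))
          = b (((η.comp extX).comp (avgR ν)).comp extX)
            + c (((η.comp extX).comp (avgR ν)).comp extY) := by
        rw [← hsum, ContinuousLinearMap.add_apply, hb, hc]
      rw [hb η, e0, TnuX (η.comp extX), TnuY (η.comp extX), _root_.map_smul, hc0]
      simp
    have key2 : ∀ η : StrongDual ℝ ((↥X × ↥Y) →ᵇ ℝ),
        a₂ η = a ((η.comp extY).comp ((avgR μ).comp swapCLM)) := by
      intro η
      have e0 : a ((η.comp extY).comp ((avgR μ).comp swapCLM))
          = b (((η.comp extY).comp ((avgR μ).comp swapCLM)).comp extX)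
            + c (((η.comp extY).comp ((avgR μ).comp swapCLM)).comp extY) := by
        rw [← hsum, ContinuousLinearMap.add_apply, hb, hc]
      rw [hc η, e0, TmuY (η.comp extY), TmuX (η.comp extY), _root_.map_smul, hb0]
      simp
    have hna₁ : ‖a₁‖ ≤ R := by
      refine ContinuousLinearMap.opNorm_le_bound _ hR.le fun η => ?_
      rw [key1 η]
      calc ‖a ((η.comp extX).comp (avgR ν))‖ ≤ ‖a‖ * ‖(η.comp extX).comp (avgR ν)‖ :=
            a.le_opNorm _
      _ ≤ R * ‖η‖ := by
          have h1 := (Tnu_norm (η.comp extX)).trans (norm_comp_extX_le η)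
          have := norm_nonneg ((η.comp extX).comp (avgR ν))
          nlinarith [norm_nonneg η, norm_nonneg a]
    have hna₂ : ‖a₂‖ ≤ R := by
      refine ContinuousLinearMap.opNorm_le_bound _ hR.le fun η => ?_
      rw [key2 η]
      calc ‖a ((η.comp extY).comp ((avgR μ).comp swapCLM))‖
          ≤ ‖a‖ * ‖(η.comp extY).comp ((avgR μ).comp swapCLM)‖ := a.le_opNorm _
      _ ≤ R * ‖η‖ := by
          have h1 := (Tmu_norm (η.comp extY)).trans (norm_comp_extY_le η)
          have := norm_nonneg ((η.comp extY).comp ((avgR μ).comp swapCLM))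
          nlinarith [norm_nonneg η, norm_nonneg a]
    refine Set.mem_add.2 ⟨a₁, ⟨⟨b, hb, hb0⟩, ?_⟩, a₂, ⟨⟨c, hc, hc0⟩, ?_⟩, hsum⟩
    · rw [Metric.mem_closedBall, dist_zero_right (E := StrongDual ℝ (StrongDual ℝ ((↥X × ↥Y) →ᵇ ℝ)))]; exact hna₁
    · rw [Metric.mem_closedBall, dist_zero_right (E := StrongDual ℝ (StrongDual ℝ ((↥X × ↥Y) →ᵇ ℝ)))]; exact hna₂
  · rintro a ⟨hmem, hball⟩
    rw [Set.mem_add] at hmem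
    obtain ⟨s, hs, n, hn, hsum⟩ := hmem
    rw [Set.mem_add] at hs
    obtain ⟨a₁, ha₁, a₂, ha₂, rfl⟩ := hs
    obtain ⟨b, hb, hb0⟩ := ha₁
    obtain ⟨c, hc, hc0⟩ := ha₂
    have hnorm : ‖a‖ ≤ R := by rwa [Metric.mem_closedBall, dist_zero_right (E := StrongDual ℝ (StrongDual ℝ ((↥X × ↥Y) →ᵇ ℝ)))] at hball
    have hnid : ∀ η : StrongDual ℝ ((↥X × ↥Y) →ᵇ ℝ),
        a η = b (η.comp extX) + c (η.comp extY) + n η := by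
      intro η
      rw [← hsum]
      simp only [ContinuousLinearMap.add_apply]
      rw [hb, hc]
    have hnneg : ∀ η, IsPos η → n η ≤ 0 := fun η hη => hn η hη
    have Tnu_pos : ∀ ξ : StrongDual ℝ (↥X →ᵇ ℝ), IsPos ξ → IsPos (ξ.comp (avgR ν)) :=
      fun ξ hξ f hf => hξ _ (avgR_pos ν hf)
    have Tmu_pos : ∀ ζ : StrongDual ℝ (↥Y →ᵇ ℝ), IsPos ζ →
        IsPos (ζ.comp ((avgR μ).comp swapCLM)) :=
      fun ζ hζ f hf => hζ _ (avgR_pos μ (swapCLM_pos hf))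
    have Tnu_norm_pos : ∀ ξ : StrongDual ℝ (↥X →ᵇ ℝ), IsPos ξ → ‖ξ.comp (avgR ν)‖ ≤ ξ 1 :=
      fun ξ hξ => (Tnu_norm ξ).trans hξ.norm_le
    have Tmu_norm_pos : ∀ ζ : StrongDual ℝ (↥Y →ᵇ ℝ), IsPos ζ →
        ‖ζ.comp ((avgR μ).comp swapCLM)‖ ≤ ζ 1 :=
      fun ζ hζ => (Tmu_norm ζ).trans hζ.norm_le
    have haval : ∀ (u : StrongDual ℝ ((↥X × ↥Y) →ᵇ ℝ)) (m : ℝ), 0 ≤ m → ‖u‖ ≤ m →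
        |a u| ≤ R * m := by
      intro u m hm hu
      have h1 := a.le_opNorm u
      rw [← Real.norm_eq_abs]
      calc ‖a u‖ ≤ ‖a‖ * ‖u‖ := h1
      _ ≤ R * m := by nlinarith [norm_nonneg u, norm_nonneg a]
    have hbval : ∀ ξ : StrongDual ℝ (↥X →ᵇ ℝ),
        b ξ = a (ξ.comp (avgR ν)) - n (ξ.comp (avgR ν)) := by
      intro ξ
      have h1 := hnid (ξ.comp (avgR ν))
      rw [TnuX ξ, TnuY ξ, _root_.map_smul, hc0] at h1
      simp only [smul_eq_mul, mul_zero] at h1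
      linarith
    have hcval : ∀ ζ : StrongDual ℝ (↥Y →ᵇ ℝ),
        c ζ = a (ζ.comp ((avgR μ).comp swapCLM)) - n (ζ.comp ((avgR μ).comp swapCLM)) := by
      intro ζ
      have h1 := hnid (ζ.comp ((avgR μ).comp swapCLM))
      rw [TmuY ζ, TmuX ζ, _root_.map_smul, hb0] at h1
      simp only [smul_eq_mul, mul_zero] at h1
      linarith
    have hblb : ∀ ξ : StrongDual ℝ (↥X →ᵇ ℝ), IsPos ξ → -(R * ξ 1) ≤ b ξ := by
      intro ξ hξ
      rw [hbval ξ]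
      have h2 := hnneg _ (Tnu_pos ξ hξ)
      have h3 := abs_le.1 (haval _ _ hξ.one_nonneg (Tnu_norm_pos ξ hξ))
      linarith [h3.1]
    -- the function ψ on the Y-side
    set Sψ : StrongDual ℝ (↥Y →ᵇ ℝ) → Set ℝ := fun ζ =>
      {r | ∃ η : StrongDual ℝ ((↥X × ↥Y) →ᵇ ℝ), IsPos η ∧ η.comp extY = ζ ∧ r = c ζ + n η}
      with hSψdef
    set ψ : StrongDual ℝ (↥Y →ᵇ ℝ) → ℝ := fun ζ => sSup (Sψ ζ) with hψdef
    have hψwit : ∀ ζ, IsPos ζ →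
        (c ζ + n (ζ.comp ((avgR μ).comp swapCLM))) ∈ Sψ ζ :=
      fun ζ hζ => ⟨_, Tmu_pos ζ hζ, TmuY ζ, rfl⟩
    have hψub' : ∀ ζ, IsPos ζ → ∀ r ∈ Sψ ζ, r ≤ 2 * R * ζ 1 := by
      rintro ζ hζ r ⟨η, hη, hMy, rfl⟩
      have h1 := hnid η
      rw [hMy] at h1
      have hηm : η 1 = ζ 1 := by rw [← hMy, comp_extY_one]
      have h2 := abs_le.1 (haval η (ζ 1) hζ.one_nonneg (hη.norm_le.trans hηm.le))
      have h3 := hblb _ (comp_extX_pos hη)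
      rw [comp_extX_one, hηm] at h3
      linarith [h2.2]
    have hψne : ∀ ζ, IsPos ζ → (Sψ ζ).Nonempty := fun ζ hζ => ⟨_, hψwit ζ hζ⟩
    have hψbdd : ∀ ζ, IsPos ζ → BddAbove (Sψ ζ) :=
      fun ζ hζ => ⟨2 * R * ζ 1, fun r hr => hψub' ζ hζ r hr⟩
    have hψub : ∀ ζ, IsPos ζ → ψ ζ ≤ 2 * R * ζ 1 :=
      fun ζ hζ => csSup_le (hψne ζ hζ) (hψub' ζ hζ)
    have hψlb : ∀ ζ, IsPos ζ → -(R * ζ 1) ≤ ψ ζ := by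
      intro ζ hζ
      have h1 : c ζ + n (ζ.comp ((avgR μ).comp swapCLM))
          = a (ζ.comp ((avgR μ).comp swapCLM)) := by rw [hcval ζ]; ring
      have h2 := abs_le.1 (haval _ _ hζ.one_nonneg (Tmu_norm_pos ζ hζ))
      have h3 := le_csSup (hψbdd ζ hζ) (hψwit ζ hζ)
      rw [hψdef]
      simp only
      linarith [h2.1]
    have hψsuper : ∀ ζ₁ ζ₂, IsPos ζ₁ → IsPos ζ₂ → ψ ζ₁ + ψ ζ₂ ≤ ψ (ζ₁ + ζ₂) := by
      intro ζ₁ ζ₂ h₁ h₂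
      refine sSup_add_sSup (hψne _ h₁) (hψne _ h₂) (hψbdd _ h₂) ?_
      rintro r₁ ⟨η₁, hη₁, hM₁, rfl⟩ r₂ ⟨η₂, hη₂, hM₂, rfl⟩
      have hmem : (c (ζ₁ + ζ₂) + n (η₁ + η₂)) ∈ Sψ (ζ₁ + ζ₂) :=
        ⟨η₁ + η₂, hη₁.add hη₂, by rw [ContinuousLinearMap.add_comp, hM₁, hM₂], rfl⟩
      have h5 := le_csSup (hψbdd _ (h₁.add h₂)) hmem
      simp only [map_add] at h5 ⊢
      linarith
    have hψsub : ∀ ζ₁ ζ₂, IsPos ζ₁ → IsPos ζ₂ → ψ (ζ₁ + ζ₂) ≤ ψ ζ₁ + ψ ζ₂ := by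
      intro ζ₁ ζ₂ h₁ h₂
      refine csSup_le (hψne _ (h₁.add h₂)) ?_
      rintro r ⟨η, hη, hMy, rfl⟩
      have hle : ∀ g : ↥Y →ᵇ ℝ, 0 ≤ g → ζ₁ g ≤ η (extY g) := by
        intro g hg
        have h4 : η (extY g) = ζ₁ g + ζ₂ g := by
          have := congrArg (fun u : StrongDual ℝ (↥Y →ᵇ ℝ) => u g) hMy
          simpa using this
        have := h₂ g hg
        linarith
      obtain ⟨ω, hω, hηω, hωY⟩ := exists_lift extY extY_inj extY_sup_zero η hη ζ₁ h₁ hle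
      have hr1 : (c ζ₁ + n ω) ∈ Sψ ζ₁ := ⟨ω, hω, hωY, rfl⟩
      have hr2 : (c ζ₂ + n (η - ω)) ∈ Sψ ζ₂ := by
        refine ⟨η - ω, hηω, ?_, rfl⟩
        rw [ContinuousLinearMap.sub_comp, hωY, hMy]
        abel
      have i₁ := le_csSup (hψbdd _ h₁) hr1
      have i₂ := le_csSup (hψbdd _ h₂) hr2
      have e : c (ζ₁ + ζ₂) + n η = (c ζ₁ + n ω) + (c ζ₂ + n (η - ω)) := by
        simp only [map_add, map_sub]
        ring
      linarith
    have hψhomle : ∀ u : ℝ, 0 < u → ∀ ζ, IsPos ζ → ψ (u • ζ) ≤ u * ψ ζ := by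
      intro u hu ζ hζ
      refine csSup_le (hψne _ (hζ.smul hu.le)) ?_
      rintro r ⟨η, hη, hMy, rfl⟩
      have hmem : (c ζ + n (u⁻¹ • η)) ∈ Sψ ζ := by
        refine ⟨u⁻¹ • η, hη.smul (by positivity), ?_, rfl⟩
        rw [ContinuousLinearMap.smul_comp, hMy, inv_smul_smul₀ hu.ne']
      have h5 := le_csSup (hψbdd _ hζ) hmem
      have e : c (u • ζ) + n η = u * (c ζ + n (u⁻¹ • η)) := by
        rw [_root_.map_smul, _root_.map_smul]
        simp only [smul_eq_mul]
        field_simp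
      rw [e]
      exact mul_le_mul_of_nonneg_left h5 hu.le
    have hψhom : ∀ u : ℝ, 0 < u → ∀ ζ, IsPos ζ → ψ (u • ζ) = u * ψ ζ := by
      intro u hu ζ hζ
      refine le_antisymm (hψhomle u hu ζ hζ) ?_
      have h1 := hψhomle u⁻¹ (by positivity) (u • ζ) (hζ.smul hu.le)
      rw [inv_smul_smul₀ hu.ne'] at h1
      have h2 := mul_le_mul_of_nonneg_left h1 hu.le
      calc u * ψ ζ ≤ u * (u⁻¹ * ψ (u • ζ)) := h2
      _ = ψ (u • ζ) := by field_simp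
    have hψν : ψ (integrationCLM ν) ≤ 0 := by
      refine csSup_le (hψne _ (intCLM_pos ν)) ?_
      rintro r ⟨η, hη, hMy, rfl⟩
      rw [hc0]
      simpa using hnneg η hη
    obtain ⟨c', hc'n, hc'ν, hc'dom⟩ := dualTrunc hR (integrationCLM ν) (intCLM_pos ν)
      (intCLM_one ν) ψ hψlb hψub hψsuper hψsub hψhom hψν
    have hc'lb : ∀ ζ, IsPos ζ → -(R * ζ 1) ≤ c' ζ :=
      fun ζ hζ => le_trans (hψlb ζ hζ) (hc'dom ζ hζ)
    -- the function φ on the X-side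
    set Sφ : StrongDual ℝ (↥X →ᵇ ℝ) → Set ℝ := fun ξ =>
      {r | ∃ η : StrongDual ℝ ((↥X × ↥Y) →ᵇ ℝ), IsPos η ∧ η.comp extX = ξ ∧
        r = a η - c' (η.comp extY)} with hSφdef
    set φ : StrongDual ℝ (↥X →ᵇ ℝ) → ℝ := fun ξ => sSup (Sφ ξ) with hφdef
    have hφwit : ∀ ξ, IsPos ξ → (a (ξ.comp (avgR ν))) ∈ Sφ ξ := by
      intro ξ hξ
      refine ⟨ξ.comp (avgR ν), Tnu_pos ξ hξ, TnuX ξ, ?_⟩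
      rw [TnuY ξ, _root_.map_smul, hc'ν]
      simp
    have hφub' : ∀ ξ, IsPos ξ → ∀ r ∈ Sφ ξ, r ≤ 2 * R * ξ 1 := by
      rintro ξ hξ r ⟨η, hη, hMx, rfl⟩
      have hηm : η 1 = ξ 1 := by rw [← hMx, comp_extX_one]
      have h2 := abs_le.1 (haval η (ξ 1) hξ.one_nonneg (hη.norm_le.trans hηm.le))
      have h3 := hc'lb _ (comp_extY_pos hη)
      rw [comp_extY_one, hηm] at h3
      linarith [h2.2]
    have hφne : ∀ ξ, IsPos ξ → (Sφ ξ).Nonempty := fun ξ hξ => ⟨_, hφwit ξ hξ⟩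
    have hφbdd : ∀ ξ, IsPos ξ → BddAbove (Sφ ξ) :=
      fun ξ hξ => ⟨2 * R * ξ 1, fun r hr => hφub' ξ hξ r hr⟩
    have hφub : ∀ ξ, IsPos ξ → φ ξ ≤ 2 * R * ξ 1 :=
      fun ξ hξ => csSup_le (hφne ξ hξ) (hφub' ξ hξ)
    have hφlb : ∀ ξ, IsPos ξ → -(R * ξ 1) ≤ φ ξ := by
      intro ξ hξ
      have h2 := abs_le.1 (haval _ _ hξ.one_nonneg (Tnu_norm_pos ξ hξ))
      have h3 := le_csSup (hφbdd ξ hξ) (hφwit ξ hξ)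
      rw [hφdef]
      simp only
      linarith [h2.1]
    have hφsuper : ∀ ξ₁ ξ₂, IsPos ξ₁ → IsPos ξ₂ → φ ξ₁ + φ ξ₂ ≤ φ (ξ₁ + ξ₂) := by
      intro ξ₁ ξ₂ h₁ h₂
      refine sSup_add_sSup (hφne _ h₁) (hφne _ h₂) (hφbdd _ h₂) ?_
      rintro r₁ ⟨η₁, hη₁, hM₁, rfl⟩ r₂ ⟨η₂, hη₂, hM₂, rfl⟩
      have hmem : (a (η₁ + η₂) - c' ((η₁ + η₂).comp extY)) ∈ Sφ (ξ₁ + ξ₂) :=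
        ⟨η₁ + η₂, hη₁.add hη₂, by rw [ContinuousLinearMap.add_comp, hM₁, hM₂], rfl⟩
      have h5 := le_csSup (hφbdd _ (h₁.add h₂)) hmem
      rw [ContinuousLinearMap.add_comp] at h5
      simp only [map_add] at h5 ⊢
      linarith
    have hφsub : ∀ ξ₁ ξ₂, IsPos ξ₁ → IsPos ξ₂ → φ (ξ₁ + ξ₂) ≤ φ ξ₁ + φ ξ₂ := by
      intro ξ₁ ξ₂ h₁ h₂
      refine csSup_le (hφne _ (h₁.add h₂)) ?_
      rintro r ⟨η, hη, hMx, rfl⟩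
      have hle : ∀ h : ↥X →ᵇ ℝ, 0 ≤ h → ξ₁ h ≤ η (extX h) := by
        intro h hh
        have h4 : η (extX h) = ξ₁ h + ξ₂ h := by
          have := congrArg (fun u : StrongDual ℝ (↥X →ᵇ ℝ) => u h) hMx
          simpa using this
        have := h₂ h hh
        linarith
      obtain ⟨ω, hω, hηω, hωX⟩ := exists_lift extX extX_inj extX_sup_zero η hη ξ₁ h₁ hle
      have hr1 : (a ω - c' (ω.comp extY)) ∈ Sφ ξ₁ := ⟨ω, hω, hωX, rfl⟩
      have hr2 : (a (η - ω) - c' ((η - ω).comp extY)) ∈ Sφ ξ₂ := by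
        refine ⟨η - ω, hηω, ?_, rfl⟩
        rw [ContinuousLinearMap.sub_comp, hωX, hMx]
        abel
      have i₁ := le_csSup (hφbdd _ h₁) hr1
      have i₂ := le_csSup (hφbdd _ h₂) hr2
      have e : a η - c' (η.comp extY)
          = (a ω - c' (ω.comp extY)) + (a (η - ω) - c' ((η - ω).comp extY)) := by
        rw [ContinuousLinearMap.sub_comp]
        simp only [map_sub]
        ring
      linarith
    have hφhomle : ∀ u : ℝ, 0 < u → ∀ ξ, IsPos ξ → φ (u • ξ) ≤ u * φ ξ := by
      intro u hu ξ hξ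
      refine csSup_le (hφne _ (hξ.smul hu.le)) ?_
      rintro r ⟨η, hη, hMx, rfl⟩
      have hmem : (a (u⁻¹ • η) - c' ((u⁻¹ • η).comp extY)) ∈ Sφ ξ := by
        refine ⟨u⁻¹ • η, hη.smul (by positivity), ?_, rfl⟩
        rw [ContinuousLinearMap.smul_comp, hMx, inv_smul_smul₀ hu.ne']
      have h5 := le_csSup (hφbdd _ hξ) hmem
      have e : a η - c' (η.comp extY) = u * (a (u⁻¹ • η) - c' ((u⁻¹ • η).comp extY)) := by
        rw [ContinuousLinearMap.smul_comp]
        simp only [_root_.map_smul, smul_eq_mul]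
        field_simp
        try ring
      rw [e]
      exact mul_le_mul_of_nonneg_left h5 hu.le
    have hφhom : ∀ u : ℝ, 0 < u → ∀ ξ, IsPos ξ → φ (u • ξ) = u * φ ξ := by
      intro u hu ξ hξ
      refine le_antisymm (hφhomle u hu ξ hξ) ?_
      have h1 := hφhomle u⁻¹ (by positivity) (u • ξ) (hξ.smul hu.le)
      rw [inv_smul_smul₀ hu.ne'] at h1
      have h2 := mul_le_mul_of_nonneg_left h1 hu.le
      calc u * φ ξ ≤ u * (u⁻¹ * φ (u • ξ)) := h2
      _ = φ (u • ξ) := by field_simp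
    have hφμ : φ (integrationCLM μ) ≤ 0 := by
      refine csSup_le (hφne _ (intCLM_pos μ)) ?_
      rintro r ⟨η, hη, hMx, rfl⟩
      have h1 := hnid η
      rw [hMx, hb0] at h1
      have hmem : (c (η.comp extY) + n η) ∈ Sψ (η.comp extY) := ⟨η, hη, rfl, rfl⟩
      have h5 := le_csSup (hψbdd _ (comp_extY_pos hη)) hmem
      have h6 := hc'dom _ (comp_extY_pos hη)
      linarith
    obtain ⟨b', hb'n, hb'μ, hb'dom⟩ := dualTrunc hR (integrationCLM μ) (intCLM_pos μ)
      (intCLM_one μ) φ hφlb hφub hφsuper hφsub hφhom hφμ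
    -- assemble the decomposition
    refine Set.mem_add.2 ⟨b'.comp margXCLM + c'.comp margYCLM,
      Set.mem_add.2 ⟨b'.comp margXCLM, ⟨⟨b', fun η => rfl, hb'μ⟩, ?_⟩,
        c'.comp margYCLM, ⟨⟨c', fun η => rfl, hc'ν⟩, ?_⟩, rfl⟩,
      a - b'.comp margXCLM - c'.comp margYCLM, ⟨?_, ?_⟩, by abel⟩
    · rw [Metric.mem_closedBall, dist_zero_right (E := StrongDual ℝ (StrongDual ℝ ((↥X × ↥Y) →ᵇ ℝ)))]
      refine ContinuousLinearMap.opNorm_le_bound _ (by positivity) fun η => ?_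
      calc ‖b' (η.comp extX)‖ ≤ ‖b'‖ * ‖η.comp extX‖ := b'.le_opNorm _
      _ ≤ 3 * R * ‖η‖ := by
          have h1 := norm_comp_extX_le η
          nlinarith [norm_nonneg (η.comp extX), norm_nonneg b', norm_nonneg η]
    · rw [Metric.mem_closedBall, dist_zero_right (E := StrongDual ℝ (StrongDual ℝ ((↥X × ↥Y) →ᵇ ℝ)))]
      refine ContinuousLinearMap.opNorm_le_bound _ (by positivity) fun η => ?_
      calc ‖c' (η.comp extY)‖ ≤ ‖c'‖ * ‖η.comp extY‖ := c'.le_opNorm _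
      _ ≤ 3 * R * ‖η‖ := by
          have h1 := norm_comp_extY_le η
          nlinarith [norm_nonneg (η.comp extY), norm_nonneg c', norm_nonneg η]
    · intro η hη
      have hmem : (a η - c' (η.comp extY)) ∈ Sφ (η.comp extX) := ⟨η, hη, rfl, rfl⟩
      have h5 := le_csSup (hφbdd _ (comp_extX_pos hη)) hmem
      have h6 := hb'dom _ (comp_extX_pos hη)
      simp only [ContinuousLinearMap.sub_apply, ContinuousLinearMap.coe_comp',
        Function.comp_apply]
      have e1 : margXCLM η = η.comp extX := rfl
      have e2 : margYCLM η = η.comp extY := rfl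
      rw [e1, e2]
      linarith
    · rw [Metric.mem_closedBall, dist_zero_right (E := StrongDual ℝ (StrongDual ℝ ((↥X × ↥Y) →ᵇ ℝ)))]
      refine ContinuousLinearMap.opNorm_le_bound _ (by positivity) fun η => ?_
      have h1 : ‖a η‖ ≤ R * ‖η‖ := by
        have := a.le_opNorm η
        nlinarith [norm_nonneg η, norm_nonneg a]
      have h2 : ‖b' (η.comp extX)‖ ≤ 3 * R * ‖η‖ := by
        have h3 := b'.le_opNorm (η.comp extX)
        have h4 := norm_comp_extX_le η
        nlinarith [norm_nonneg (η.comp extX), norm_nonneg b', norm_nonneg η]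
      have h2' : ‖c' (η.comp extY)‖ ≤ 3 * R * ‖η‖ := by
        have h3 := c'.le_opNorm (η.comp extY)
        have h4 := norm_comp_extY_le η
        nlinarith [norm_nonneg (η.comp extY), norm_nonneg c', norm_nonneg η]
      have e : (a - b'.comp margXCLM - c'.comp margYCLM
            : StrongDual ℝ (StrongDual ℝ ((↥X × ↥Y) →ᵇ ℝ))) η
          = a η - b' (η.comp extX) - c' (η.comp extY) := rfl
      rw [e]
      have := abs_le.1 (Real.norm_eq_abs _ ▸ h1)
      have := abs_le.1 (Real.norm_eq_abs _ ▸ h2)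
      have := abs_le.1 (Real.norm_eq_abs _ ▸ h2')
      rw [Real.norm_eq_abs, abs_le]
      constructor <;> linarith

end
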